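/- Let d, m ≥ 1, let Π : Fin m → (d×d complex matrices) be Hermitian positive semidefinite matrices with ∑_ξ Π_ξ = I, and let ρ be a Hermitian positive definite d×d matrix with tr ρ = 1. Set p_ξ := tr(Π_ξ ρ) and assume p_ξ > 0 for every ξ. Suppose Θ : Fin m → (d×d Hermitian matrices) satisfies the dual-frame condition ∑_ξ tr(Π_ξ X) Θ_ξ = X for every Hermitian matrix X. Define the ℝ-linear map F on the real vector space of d×d Hermitian matrices by F(X) = ∑_ξ p_ξ⁻¹ tr(Π_ξ X) Π_ξ. Then F is bijective, and for every Hermitian matrix X one has ∑_ξ p_ξ (tr(Θ_ξ X))² ≥ tr(X · F⁻¹(X)). -/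

import Mathlib

open Matrix ComplexOrder
open scoped BigOperators

private lemma herm_trace_real' {d : ℕ} {A B : Matrix (Fin d) (Fin d) ℂ}
    (hA : A.IsHermitian) (hB : B.IsHermitian) :
    (A * B).trace = (((A * B).trace.re : ℝ) : ℂ) := by
  have h : (starRingEnd ℂ) ((A * B).trace) = (A * B).trace := by
    have h2 : star ((A * B).trace) = ((A * B)ᴴ).trace := (Matrix.trace_conjTranspose _).symm
    rw [starRingEnd_apply, h2, Matrix.conjTranspose_mul, hA.eq, hB.eq, Matrix.trace_mul_comm]
  exact (Complex.conj_eq_iff_re.mp h).symm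

theorem stmt_2 (d m : ℕ) (hd : 1 ≤ d) (hm : 1 ≤ m)
    (P : Fin m → Matrix (Fin d) (Fin d) ℂ)
    (hP : ∀ ξ, (P ξ).PosSemidef) (hPsum : ∑ ξ, P ξ = 1)
    (ρ : Matrix (Fin d) (Fin d) ℂ) (hρ : ρ.PosDef) (hρtr : ρ.trace = 1)
    (p : Fin m → ℝ) (hp : ∀ ξ, (p ξ : ℂ) = (P ξ * ρ).trace) (hppos : ∀ ξ, 0 < p ξ)
    (Θ : Fin m → Matrix (Fin d) (Fin d) ℂ) (hΘ : ∀ ξ, (Θ ξ).IsHermitian)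
    (hdual : ∀ X : Matrix (Fin d) (Fin d) ℂ, X.IsHermitian →
      ∑ ξ, ((P ξ * X).trace) • Θ ξ = X)
    (F : Matrix (Fin d) (Fin d) ℂ → Matrix (Fin d) (Fin d) ℂ)
    (hF : ∀ X, F X = ∑ ξ, (((p ξ : ℂ))⁻¹ * (P ξ * X).trace) • P ξ) :
    (∀ Y : Matrix (Fin d) (Fin d) ℂ, Y.IsHermitian →
      ∃! X : Matrix (Fin d) (Fin d) ℂ, X.IsHermitian ∧ F X = Y) ∧
    (∀ X Y : Matrix (Fin d) (Fin d) ℂ, X.IsHermitian → Y.IsHermitian → F Y = X →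
      ∑ ξ, p ξ * ((Θ ξ * X).trace.re) ^ 2 ≥ ((X * Y).trace).re) := by
  have hPh : ∀ ξ, (P ξ).IsHermitian := fun ξ => (hP ξ).1
  -- F of a Hermitian matrix is Hermitian
  have hFherm : ∀ X : Matrix (Fin d) (Fin d) ℂ, X.IsHermitian → (F X).IsHermitian := by
    intro X hX
    rw [hF]
    show (∑ ξ, (((p ξ : ℂ))⁻¹ * (P ξ * X).trace) • P ξ)ᴴ = _
    rw [Matrix.conjTranspose_sum]
    refine Finset.sum_congr rfl fun ξ _ => ?_
    have hc : star (((p ξ : ℂ))⁻¹ * (P ξ * X).trace) = ((p ξ : ℂ))⁻¹ * (P ξ * X).trace := by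
      rw [herm_trace_real' (hPh ξ) hX]
      simp [← Complex.ofReal_inv, ← Complex.ofReal_mul]
    rw [Matrix.conjTranspose_smul, hc, (hPh ξ).eq]
  -- trace of X * F Y
  have hXFY : ∀ X Y : Matrix (Fin d) (Fin d) ℂ,
      (X * F Y).trace = ∑ ξ, ((p ξ : ℂ))⁻¹ * ((P ξ * Y).trace) * ((P ξ * X).trace) := by
    intro X Y
    rw [hF, Matrix.mul_sum, Matrix.trace_sum]
    refine Finset.sum_congr rfl fun ξ _ => ?_
    rw [Matrix.mul_smul, Matrix.trace_smul, smul_eq_mul, Matrix.trace_mul_comm X (P ξ)]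
  -- injectivity on Hermitian matrices
  have hinj : ∀ X : Matrix (Fin d) (Fin d) ℂ, X.IsHermitian → F X = 0 → X = 0 := by
    intro X hX h0
    have h1 : (X * F X).trace = 0 := by rw [h0, Matrix.mul_zero, Matrix.trace_zero]
    rw [hXFY X X] at h1
    have h1' : ((∑ ξ, (p ξ)⁻¹ * ((P ξ * X).trace.re) ^ 2 : ℝ) : ℂ) = 0 := by
      rw [← h1]
      push_cast
      refine Finset.sum_congr rfl fun ξ _ => ?_
      conv_rhs => rw [herm_trace_real' (hPh ξ) hX]
      push_cast
      ring
    have h2 : ∑ ξ, (p ξ)⁻¹ * ((P ξ * X).trace.re) ^ 2 = 0 := by exact_mod_cast h1'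
    have ht0 : ∀ ξ, (P ξ * X).trace = 0 := by
      intro ξ
      have hterm := (Finset.sum_eq_zero_iff_of_nonneg (fun ξ _ =>
        mul_nonneg (inv_nonneg.mpr (hppos ξ).le) (sq_nonneg _))).mp h2 ξ (Finset.mem_univ ξ)
      have hre : (P ξ * X).trace.re = 0 := by
        have hpne : (p ξ)⁻¹ ≠ 0 := inv_ne_zero (hppos ξ).ne'
        have := (mul_eq_zero.mp hterm).resolve_left hpne
        exact pow_eq_zero_iff (n := 2) (by norm_num) |>.mp this
      rw [herm_trace_real' (hPh ξ) hX, hre]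
      simp
    have hd' := hdual X hX
    rw [← hd']
    refine Finset.sum_eq_zero fun ξ _ => by rw [ht0 ξ, zero_smul]
  -- F as a ℂ-linear map
  let G : Matrix (Fin d) (Fin d) ℂ →ₗ[ℂ] Matrix (Fin d) (Fin d) ℂ :=
    { toFun := F
      map_add' := fun A B => by
        simp only [hF, Matrix.mul_add, Matrix.trace_add, mul_add, add_smul,
          Finset.sum_add_distrib]
      map_smul' := fun c A => by
        simp only [hF, RingHom.id_apply, Matrix.mul_smul, Matrix.trace_smul, smul_eq_mul,
          Finset.smul_sum, smul_smul]
        refine Finset.sum_congr rfl fun ξ _ => ?_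
        congr 1
        ring }
  constructor
  · -- bijectivity on Hermitian matrices
    intro Y hY
    -- the submodule of Hermitian matrices
    let S : Submodule ℝ (Matrix (Fin d) (Fin d) ℂ) :=
      { carrier := {X | X.IsHermitian}
        add_mem' := fun hA hB => hA.add hB
        zero_mem' := Matrix.isHermitian_zero
        smul_mem' := fun r X hX => by
          show (r • X).IsHermitian
          show (r • X)ᴴ = r • X
          rw [Matrix.conjTranspose_smul, star_trivial, hX.eq] }
    have hmem : ∀ x ∈ S, (G.restrictScalars ℝ) x ∈ S := fun x hx => hFherm x hx
    let Gr : S →ₗ[ℝ] S := (G.restrictScalars ℝ).restrict hmem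
    have hGrinj : Function.Injective Gr := by
      intro x y hxy
      have hxy' : F x.val = F y.val := congrArg Subtype.val hxy
      have hms : F (x.val - y.val) = F x.val - F y.val := map_sub G x.val y.val
      have h0 : F (x.val - y.val) = 0 := by rw [hms, hxy', sub_self]
      exact Subtype.ext (sub_eq_zero.mp (hinj _ (x.2.sub y.2) h0))
    have hGrsurj : Function.Surjective Gr :=
      (LinearMap.injective_iff_surjective).mp hGrinj
    obtain ⟨X, hXeq⟩ := hGrsurj ⟨Y, hY⟩
    have hFXY : F X.val = Y := congrArg Subtype.val hXeq
    refine ⟨X.val, ⟨X.2, hFXY⟩, ?_⟩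
    intro Z hZ
    have hms : F (Z - X.val) = F Z - F X.val := map_sub G Z X.val
    have h0 : F (Z - X.val) = 0 := by rw [hms, hZ.2, hFXY, sub_self]
    exact sub_eq_zero.mp (hinj _ (hZ.1.sub X.2) h0)
  · -- the Cauchy–Schwarz bound
    intro X Y hX hY hFY
    set a : Fin m → ℝ := fun ξ => ((P ξ * Y).trace).re with hadef
    set b : Fin m → ℝ := fun ξ => ((Θ ξ * X).trace).re with hbdef
    have haξ : ∀ ξ, (P ξ * Y).trace = ((a ξ : ℝ) : ℂ) := fun ξ =>
      herm_trace_real' (hPh ξ) hY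
    have hbξ : ∀ ξ, (Θ ξ * X).trace = ((b ξ : ℝ) : ℂ) := fun ξ =>
      herm_trace_real' (hΘ ξ) hX
    set T : ℝ := ∑ ξ, (p ξ)⁻¹ * a ξ ^ 2 with hTdef
    have key1 : (X * Y).trace = ((T : ℝ) : ℂ) := by
      rw [Matrix.trace_mul_comm, ← hFY, hXFY Y Y, hTdef]
      push_cast
      refine Finset.sum_congr rfl fun ξ _ => ?_
      rw [haξ ξ]
      push_cast
      ring
    have key2 : (X * Y).trace = ((∑ ξ, a ξ * b ξ : ℝ) : ℂ) := by
      conv_lhs => rw [← hdual Y hY]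
      rw [Matrix.mul_sum, Matrix.trace_sum]
      push_cast
      refine Finset.sum_congr rfl fun ξ _ => ?_
      rw [Matrix.mul_smul, Matrix.trace_smul, smul_eq_mul, Matrix.trace_mul_comm X (Θ ξ),
        haξ ξ, hbξ ξ]
    have hTab : ∑ ξ, a ξ * b ξ = T := by
      have := key2.symm.trans key1
      exact_mod_cast this
    have hre : ((X * Y).trace).re = T := by rw [key1]; exact Complex.ofReal_re T
    have hTnn : 0 ≤ T := Finset.sum_nonneg fun ξ _ =>
      mul_nonneg (inv_nonneg.mpr (hppos ξ).le) (sq_nonneg _)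
    have hgoal : ∑ ξ, p ξ * ((Θ ξ * X).trace.re) ^ 2 = ∑ ξ, p ξ * b ξ ^ 2 := rfl
    rw [ge_iff_le, hre, hgoal]
    -- Cauchy–Schwarz
    have hcs := Finset.sum_mul_sq_le_sq_mul_sq Finset.univ
      (fun ξ => a ξ / Real.sqrt (p ξ)) (fun ξ => Real.sqrt (p ξ) * b ξ)
    have h1 : ∑ ξ, (a ξ / Real.sqrt (p ξ)) * (Real.sqrt (p ξ) * b ξ) = ∑ ξ, a ξ * b ξ := by
      refine Finset.sum_congr rfl fun ξ _ => ?_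
      have hs : Real.sqrt (p ξ) ≠ 0 := (Real.sqrt_pos.mpr (hppos ξ)).ne'
      field_simp
    have h2 : ∑ ξ, (a ξ / Real.sqrt (p ξ)) ^ 2 = T := by
      rw [hTdef]
      refine Finset.sum_congr rfl fun ξ _ => ?_
      rw [div_pow, Real.sq_sqrt (hppos ξ).le]
      ring
    have h3 : ∑ ξ, (Real.sqrt (p ξ) * b ξ) ^ 2 = ∑ ξ, p ξ * b ξ ^ 2 := by
      refine Finset.sum_congr rfl fun ξ _ => ?_
      rw [mul_pow, Real.sq_sqrt (hppos ξ).le]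
    rw [h1, h2, h3, hTab] at hcs
    -- hcs : T ^ 2 ≤ T * ∑ p b²
    rcases eq_or_lt_of_le hTnn with h0 | h0
    · rw [← h0]
      exact Finset.sum_nonneg fun ξ _ => mul_nonneg (hppos ξ).le (sq_nonneg _)
    · have : T * T ≤ T * ∑ ξ, p ξ * b ξ ^ 2 := by nlinarith [hcs]
      exact le_of_mul_le_mul_left this h0
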